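/- arXiv:2507.21434 — 2 statements merged into one kernel-verified Lean document; each statement's English description precedes it below -/
import Mathlib

section
/- Let (Ω, μ) be a probability space and let Z_i = (U_i, V_i), i ∈ ℕ, be an i.i.d. sequence of random vectors in ℝ² with common law ν. Define the sample Kendall's tau τ̂_n = (2/(n(n−1))) · Σ_{1≤i<j≤n} sign((U_i − U_j)(V_i − V_j)) and the population Kendall's tau τ* = ∫∫ sign((u₁ − u₂)(v₁ − v₂)) d(ν ⊗ ν). Then τ̂_n → τ* almost surely as n → ∞, and consequently τ̂_n → τ* in probability. -/
open MeasureTheory ProbabilityTheory Filter Finset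

noncomputable def kern (z w : ℝ × ℝ) : ℝ := Real.sign ((z.1 - w.1) * (z.2 - w.2))

lemma measurable_realSign : Measurable Real.sign := by
  unfold Real.sign
  exact Measurable.ite measurableSet_Iio measurable_const
    (Measurable.ite measurableSet_Ioi measurable_const measurable_const)

lemma abs_realSign_le (x : ℝ) : |Real.sign x| ≤ 1 := by
  rcases Real.sign_apply_eq x with h | h | h <;> rw [h] <;> norm_num

lemma kern_meas : Measurable (fun q : (ℝ × ℝ) × (ℝ × ℝ) => kern q.1 q.2) := by
  apply measurable_realSign.comp
  exact ((measurable_fst.fst.sub measurable_snd.fst).mul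
    (measurable_fst.snd.sub measurable_snd.snd))

lemma abs_kern_le (z w : ℝ × ℝ) : |kern z w| ≤ 1 := abs_realSign_le _

-- helper: cards
lemma card_union_le_three {A B : Finset ℕ} (hA : A.card ≤ 2) (hB : B.card ≤ 2)
    (h : ¬ Disjoint A B) : (A ∪ B).card ≤ 3 := by
  have h1 := Finset.card_union_add_card_inter A B
  have h2 : 1 ≤ (A ∩ B).card := by
    rw [Finset.one_le_card]
    rwa [Finset.disjoint_iff_inter_eq_empty, ← ne_eq, ← Finset.nonempty_iff_ne_empty] at h
  omega

lemma card_union_le_succ {U C : Finset ℕ} (hC : C.card ≤ 2) (h : ¬ Disjoint C U) :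
    (U ∪ C).card ≤ U.card + 1 := by
  have h1 := Finset.card_union_add_card_inter U C
  have h2 : 1 ≤ (U ∩ C).card := by
    rw [Finset.one_le_card]
    rw [Finset.disjoint_iff_inter_eq_empty, ← ne_eq, ← Finset.nonempty_iff_ne_empty] at h
    rw [Finset.inter_comm]; exact h
  omega

lemma helper6 (A B C D : Finset ℕ) (hA : A.card ≤ 2) (hB : B.card ≤ 2) (hC : C.card ≤ 2)
    (hD : D.card ≤ 2) (hAB : ¬ Disjoint A B)
    (hC' : ¬ Disjoint C (A ∪ B ∪ D)) (hD' : ¬ Disjoint D (A ∪ B ∪ C)) :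
    (A ∪ B ∪ C ∪ D).card ≤ 6 := by
  by_cases hCD : Disjoint C D
  · have hC2 : ¬ Disjoint C (A ∪ B) := by
      simp only [Finset.disjoint_union_right] at hC' ⊢
      tauto
    have hD2 : ¬ Disjoint D (A ∪ B) := by
      simp only [Finset.disjoint_union_right] at hD' ⊢
      have := hCD.symm
      tauto
    have h1 : (A ∪ B).card ≤ 3 := card_union_le_three hA hB hAB
    have h2 : (A ∪ B ∪ C).card ≤ 4 := le_trans (card_union_le_succ hC hC2) (by omega)
    have hD3 : ¬ Disjoint D (A ∪ B ∪ C) := hD'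
    exact le_trans (card_union_le_succ hD hD3) (by omega)
  · have h1 : (A ∪ B).card ≤ 3 := card_union_le_three hA hB hAB
    have h2 : (C ∪ D).card ≤ 3 := card_union_le_three hC hD hCD
    calc (A ∪ B ∪ C ∪ D).card = ((A ∪ B) ∪ (C ∪ D)).card := by rw [Finset.union_assoc]
    _ ≤ (A ∪ B).card + (C ∪ D).card := Finset.card_union_le _ _
    _ ≤ 6 := by omega

lemma four_sets_card_le_six (A B C D : Finset ℕ) (hA : A.card ≤ 2) (hB : B.card ≤ 2)
    (hC : C.card ≤ 2) (hD : D.card ≤ 2)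
    (h1 : ¬ Disjoint A (B ∪ C ∪ D)) (h2 : ¬ Disjoint B (A ∪ C ∪ D))
    (h3 : ¬ Disjoint C (A ∪ B ∪ D)) (h4 : ¬ Disjoint D (A ∪ B ∪ C)) :
    (A ∪ B ∪ C ∪ D).card ≤ 6 := by
  simp only [Finset.disjoint_union_right] at h1
  have key : ∀ X Y Z W : Finset ℕ, X ∪ Y ∪ Z ∪ W = A ∪ B ∪ C ∪ D →
      X.card ≤ 2 → Y.card ≤ 2 → Z.card ≤ 2 → W.card ≤ 2 → ¬ Disjoint X Y →
      ¬ Disjoint Z (X ∪ Y ∪ W) → ¬ Disjoint W (X ∪ Y ∪ Z) →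
      (A ∪ B ∪ C ∪ D).card ≤ 6 := by
    intro X Y Z W he hX hY hZ hW hXY hZ' hW'
    rw [← he]; exact helper6 X Y Z W hX hY hZ hW hXY hZ' hW'
  by_cases hAB : Disjoint A B
  · by_cases hAC : Disjoint A C
    · -- A meets D
      have hAD : ¬ Disjoint A D := by tauto
      refine key A D B C ?_ hA hD hB hC hAD ?_ ?_
      · ext x; simp only [Finset.mem_union]; tauto
      · simp only [Finset.disjoint_union_right] at h2 ⊢
        have := hAB.symm; tauto
      · simp only [Finset.disjoint_union_right] at h3 ⊢
        have := hAC.symm; tauto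
    · refine key A C B D ?_ hA hC hB hD hAC ?_ ?_
      · ext x; simp only [Finset.mem_union]; tauto
      · simp only [Finset.disjoint_union_right] at h2 ⊢
        have := hAB.symm; tauto
      · simp only [Finset.disjoint_union_right] at h4 ⊢; tauto
  · refine key A B C D rfl hA hB hC hD hAB h3 h4

abbrev Tup := (ℕ×ℕ) × (ℕ×ℕ) × (ℕ×ℕ) × (ℕ×ℕ)

def coords (t : Tup) : Fin 8 → ℕ :=
  ![t.1.1, t.1.2, t.2.1.1, t.2.1.2, t.2.2.1.1, t.2.2.1.2, t.2.2.2.1, t.2.2.2.2]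

def verts (t : Tup) : Finset ℕ := Finset.image (coords t) Finset.univ

lemma coords_inj {t t' : Tup} (h : ∀ i, coords t i = coords t' i) : t = t' := by
  obtain ⟨⟨a,b⟩,⟨c,d⟩,⟨e,f⟩,⟨g,k⟩⟩ := t
  obtain ⟨⟨a',b'⟩,⟨c',d'⟩,⟨e',f'⟩,⟨g',k'⟩⟩ := t'
  simp only [Prod.mk.injEq]
  exact ⟨⟨h 0, h 1⟩, ⟨h 2, h 3⟩, ⟨h 4, h 5⟩, h 6, h 7⟩

noncomputable def enc (t : Tup) : (Fin 6 → ℕ) × (Fin 8 → Fin 6) :=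
  (fun i => ((verts t).sort (·≤·)).getD i 0,
   fun i => ⟨min (((verts t).sort (·≤·)).idxOf (coords t i)) 5, by omega⟩)

lemma enc_recover {t : Tup} (h : (verts t).card ≤ 6) (i : Fin 8) :
    (enc t).1 ((enc t).2 i) = coords t i := by
  set l := (verts t).sort (·≤·) with hl
  have hmem : coords t i ∈ l := by
    rw [hl, Finset.mem_sort]
    exact Finset.mem_image_of_mem _ (Finset.mem_univ i)
  have hidx : l.idxOf (coords t i) < l.length := List.idxOf_lt_length_iff.mpr hmem
  have hlen : l.length ≤ 6 := by rw [hl, Finset.length_sort]; exact h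
  have hmin : min (l.idxOf (coords t i)) 5 = l.idxOf (coords t i) := by omega
  simp only [enc, ← hl, hmin]
  rw [List.getD_eq_getElem l 0 hidx, List.getElem_idxOf hidx]

lemma count_lemma (n : ℕ) (A : Finset Tup) (hA : ∀ t ∈ A, ∀ i, coords t i < n) :
    (A.filter (fun t => (verts t).card ≤ 6)).card ≤ (n+1)^6 * 6^8 := by
  classical
  have hcard : ((Fintype.piFinset (fun _ : Fin 6 => Finset.range (n+1))) ×ˢ
      (Finset.univ : Finset (Fin 8 → Fin 6))).card = (n+1)^6 * 6^8 := by
    rw [Finset.card_product, Fintype.card_piFinset]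
    simp [Finset.card_univ, Fintype.card_fun]
  rw [← hcard]
  apply Finset.card_le_card_of_injOn enc
  · intro t ht
    rw [Finset.mem_coe, Finset.mem_filter] at ht
    obtain ⟨htA, _⟩ := ht
    rw [Finset.mem_coe, Finset.mem_product]
    constructor
    · rw [Fintype.mem_piFinset]
      intro i
      rw [Finset.mem_range]
      set l := (verts t).sort (·≤·)
      by_cases hi : (i : ℕ) < l.length
      · rw [show (enc t).1 i = l.getD i 0 from rfl, List.getD_eq_getElem l 0 hi]
        have : l[(i:ℕ)] ∈ l := List.getElem_mem _
        rw [Finset.mem_sort] at this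
        rw [verts, Finset.mem_image] at this
        obtain ⟨j, _, hj⟩ := this
        have := hA t htA j
        omega
      · rw [show (enc t).1 i = l.getD i 0 from rfl, List.getD_eq_default l 0 (by omega)]
        omega
    · exact Finset.mem_univ _
  · intro t ht t' ht' he
    simp only [Finset.coe_filter, Set.mem_setOf_eq] at ht ht'
    apply coords_inj
    intro i
    rw [← enc_recover ht.2 i, ← enc_recover ht'.2 i, he]

def pairs (n : ℕ) : Finset (ℕ×ℕ) := (range n ×ˢ range n).filter (fun p => p.1 < p.2)

lemma filter_range_eq_Ioo (n i : ℕ) : (range n).filter (fun j => i < j) = Ioo i n := by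
  ext j; simp only [Finset.mem_filter, Finset.mem_range, Finset.mem_Ioo]; omega

lemma sum_pairs {M : Type*} [AddCommMonoid M] (n : ℕ) (f : ℕ → ℕ → M) :
    ∑ p ∈ pairs n, f p.1 p.2 = ∑ i ∈ range n, ∑ j ∈ Ioo i n, f i j := by
  rw [pairs, Finset.sum_filter, Finset.sum_product]
  apply Finset.sum_congr rfl
  intro i _
  rw [← filter_range_eq_Ioo n i, Finset.sum_filter]

lemma mem_pairs {n : ℕ} {p : ℕ×ℕ} (h : p ∈ pairs n) : p.1 < p.2 ∧ p.1 < n ∧ p.2 < n := by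
  rw [pairs, Finset.mem_filter, Finset.mem_product] at h
  simp only [Finset.mem_range] at h
  tauto

lemma card_pairs (n : ℕ) : (pairs n).card * 2 = n * (n-1) := by
  have h1 : (pairs n).card = ∑ i ∈ range n, (Ioo i n).card := by
    rw [Finset.card_eq_sum_ones, sum_pairs n (fun _ _ => 1)]
    exact Finset.sum_congr rfl (fun i _ => (Finset.card_eq_sum_ones _).symm)
  have h2 : ∀ i ∈ range n, (Ioo i n).card = n - 1 - i := by
    intro i _; rw [Nat.card_Ioo]; omega
  rw [h1, Finset.sum_congr rfl h2, Finset.sum_range_reflect (fun i => i) n,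
    Finset.sum_range_id_mul_two]
section Main
open MeasureTheory ProbabilityTheory Filter Finset

variable {Ω : Type*} [MeasurableSpace Ω] (μ : Measure Ω) [IsProbabilityMeasure μ]
  (Z : ℕ → Ω → ℝ × ℝ) (hZmeas : ∀ i, Measurable (Z i))
  (hindep : iIndepFun Z μ)
  (ν : Measure (ℝ × ℝ)) (hlaw : ∀ i, Measure.map (Z i) μ = ν)
  (τstar : ℝ)
  (hτstar : τstar = ∫ p : (ℝ × ℝ) × (ℝ × ℝ), kern p.1 p.2 ∂(ν.prod ν))

-- mean of the kernel at distinct indices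
include μ Z hZmeas hindep ν hlaw hτstar in
theorem kern_mean {i j : ℕ} (hij : i ≠ j) :
    ∫ ω, kern (Z i ω) (Z j ω) ∂μ = τstar := by
  have hpair : Measure.map (fun ω => (Z i ω, Z j ω)) μ = ν.prod ν := by
    rw [(indepFun_iff_map_prod_eq_prod_map_map (hZmeas i).aemeasurable
      (hZmeas j).aemeasurable).mp (hindep.indepFun hij), hlaw i, hlaw j]
  rw [hτstar, ← hpair,
    integral_map ((hZmeas i).prodMk (hZmeas j)).aemeasurable kern_meas.aestronglyMeasurable]

end Main
section Main2
open MeasureTheory ProbabilityTheory Filter Finset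

variable {Ω : Type*} [MeasurableSpace Ω] (μ : Measure Ω) [IsProbabilityMeasure μ]
  (Z : ℕ → Ω → ℝ × ℝ) (hZmeas : ∀ i, Measurable (Z i))
  (hindep : iIndepFun Z μ)
  (ν : Measure (ℝ × ℝ)) (hlaw : ∀ i, Measure.map (Z i) μ = ν)
  (τstar : ℝ)
  (hτstar : τstar = ∫ p : (ℝ × ℝ) × (ℝ × ℝ), kern p.1 p.2 ∂(ν.prod ν))

-- bounded measurable functions are integrable
theorem bdd_integrable (f : Ω → ℝ) (C : ℝ) (hf : Measurable f) (hb : ∀ ω, |f ω| ≤ C) :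
    Integrable f μ :=
  ⟨hf.aestronglyMeasurable, HasFiniteIntegral.of_bounded (C := C) (ae_of_all _ hb)⟩

include Z hZmeas hindep ν hlaw hτstar in
theorem isolated_zero (p q r s : ℕ × ℕ) (hp : p.1 ≠ p.2)
    (hd : Disjoint ({p.1, p.2} : Finset ℕ) ({q.1, q.2, r.1, r.2, s.1, s.2} : Finset ℕ)) :
    ∫ ω, (kern (Z p.1 ω) (Z p.2 ω) - τstar) *
      ((kern (Z q.1 ω) (Z q.2 ω) - τstar) * ((kern (Z r.1 ω) (Z r.2 ω) - τstar) *
        (kern (Z s.1 ω) (Z s.2 ω) - τstar))) ∂μ = 0 := by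
  classical
  set S : Finset ℕ := {p.1, p.2} with hS
  set T : Finset ℕ := {q.1, q.2, r.1, r.2, s.1, s.2} with hT
  have hpm1 : p.1 ∈ S := by simp [hS]
  have hpm2 : p.2 ∈ S := by simp [hS]
  have hqm1 : q.1 ∈ T := by simp [hT]
  have hqm2 : q.2 ∈ T := by simp [hT]
  have hrm1 : r.1 ∈ T := by simp [hT]
  have hrm2 : r.2 ∈ T := by simp [hT]
  have hsm1 : s.1 ∈ T := by simp [hT]
  have hsm2 : s.2 ∈ T := by simp [hT]
  have base := hindep.indepFun_finset S T hd hZmeas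
  set φ : (S → ℝ × ℝ) → ℝ := fun x => kern (x ⟨p.1, hpm1⟩) (x ⟨p.2, hpm2⟩) - τstar with hφ
  set ψ : (T → ℝ × ℝ) → ℝ := fun x =>
    (kern (x ⟨q.1, hqm1⟩) (x ⟨q.2, hqm2⟩) - τstar) *
      ((kern (x ⟨r.1, hrm1⟩) (x ⟨r.2, hrm2⟩) - τstar) *
        (kern (x ⟨s.1, hsm1⟩) (x ⟨s.2, hsm2⟩) - τstar)) with hψ
  have hφm : Measurable φ := by
    apply Measurable.sub ?_ measurable_const
    exact kern_meas.comp (((measurable_pi_apply _).prodMk (measurable_pi_apply _) :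
      Measurable fun x : S → ℝ × ℝ => (x ⟨p.1, hpm1⟩, x ⟨p.2, hpm2⟩)))
  have hk : ∀ (a b : T), Measurable (fun x : T → ℝ × ℝ => kern (x a) (x b) - τstar) := by
    intro a b
    apply Measurable.sub ?_ measurable_const
    exact kern_meas.comp (((measurable_pi_apply _).prodMk (measurable_pi_apply _) :
      Measurable fun x : T → ℝ × ℝ => (x a, x b)))
  have hψm : Measurable ψ := ((hk _ _).mul ((hk _ _).mul (hk _ _)))
  have hI : IndepFun (fun ω => φ (fun i : S => Z i ω)) (fun ω => ψ (fun i : T => Z i ω)) μ :=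
    base.comp hφm hψm
  have hτb : |τstar| ≤ 1 := by
    have hν : IsProbabilityMeasure ν := by
      rw [← hlaw 0]; exact Measure.isProbabilityMeasure_map (hZmeas 0).aemeasurable
    rw [hτstar]
    have h := norm_integral_le_of_norm_le_const (μ := ν.prod ν)
      (f := fun p : (ℝ × ℝ) × (ℝ × ℝ) => kern p.1 p.2) (C := 1)
      (ae_of_all _ fun q => by rw [Real.norm_eq_abs]; exact abs_kern_le q.1 q.2)
    rw [Real.norm_eq_abs] at h
    simpa using h
  have habs : ∀ (z w : ℝ × ℝ), |kern z w - τstar| ≤ 2 := by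
    intro z w
    calc |kern z w - τstar| ≤ |kern z w| + |τstar| := abs_sub _ _
    _ ≤ 2 := by have := abs_kern_le z w; linarith
  have hgm : ∀ (a b : ℕ), Measurable (fun ω => kern (Z a ω) (Z b ω) - τstar) := by
    intro a b
    exact (kern_meas.comp ((hZmeas a).prodMk (hZmeas b))).sub measurable_const
  have hX : Integrable (fun ω => φ (fun i : S => Z i ω)) μ :=
    bdd_integrable μ _ 2 (hgm p.1 p.2) (fun ω => habs _ _)
  have hY : Integrable (fun ω => ψ (fun i : T => Z i ω)) μ := by
    apply bdd_integrable μ _ 8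
    · exact (hgm q.1 q.2).mul ((hgm r.1 r.2).mul (hgm s.1 s.2))
    · intro ω
      rw [abs_mul, abs_mul]
      calc |kern (Z q.1 ω) (Z q.2 ω) - τstar| *
          (|kern (Z r.1 ω) (Z r.2 ω) - τstar| * |kern (Z s.1 ω) (Z s.2 ω) - τstar|) ≤
          2 * (2 * 2) := by
            apply mul_le_mul (habs _ _) ?_ (by positivity) (by norm_num)
            apply mul_le_mul (habs _ _) (habs _ _) (abs_nonneg _) (by norm_num)
      _ = 8 := by norm_num
  have hmul := hI.integral_mul_eq_mul_integral hX.aestronglyMeasurable hY.aestronglyMeasurable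
  have hEX : ∫ ω, φ (fun i : S => Z i ω) ∂μ = 0 := by
    have h1 : ∫ ω, kern (Z p.1 ω) (Z p.2 ω) ∂μ = τstar :=
      kern_mean μ Z hZmeas hindep ν hlaw τstar hτstar hp
    have h2 : Integrable (fun ω => kern (Z p.1 ω) (Z p.2 ω)) μ :=
      bdd_integrable μ _ 1 (kern_meas.comp ((hZmeas p.1).prodMk (hZmeas p.2)))
        (fun ω => abs_kern_le _ _)
    simp only [hφ]
    rw [integral_sub h2 (integrable_const _), h1, integral_const]
    simp
  calc ∫ ω, (kern (Z p.1 ω) (Z p.2 ω) - τstar) *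
      ((kern (Z q.1 ω) (Z q.2 ω) - τstar) * ((kern (Z r.1 ω) (Z r.2 ω) - τstar) *
        (kern (Z s.1 ω) (Z s.2 ω) - τstar))) ∂μ
      = ∫ ω, ((fun ω => φ (fun i : S => Z i ω)) * (fun ω => ψ (fun i : T => Z i ω))) ω ∂μ := rfl
  _ = (∫ ω, φ (fun i : S => Z i ω) ∂μ) * ∫ ω, ψ (fun i : T => Z i ω) ∂μ := hmul
  _ = 0 := by rw [hEX, zero_mul]

end Main2
section Main3
open MeasureTheory ProbabilityTheory Filter Finset

lemma verts_eq (t : Tup) : verts t =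
    ({t.1.1, t.1.2} : Finset ℕ) ∪ {t.2.1.1, t.2.1.2} ∪ {t.2.2.1.1, t.2.2.1.2} ∪
      {t.2.2.2.1, t.2.2.2.2} := by
  ext x
  simp only [verts, Finset.mem_image, Finset.mem_univ, true_and, Finset.mem_union,
    Finset.mem_insert, Finset.mem_singleton]
  constructor
  · rintro ⟨i, rfl⟩
    fin_cases i <;> simp [coords] <;> tauto
  · intro h
    rcases h with (((h|h)|(h|h))|(h|h))|(h|h)
    exacts [⟨0, h.symm⟩, ⟨1, h.symm⟩, ⟨2, h.symm⟩, ⟨3, h.symm⟩, ⟨4, h.symm⟩, ⟨5, h.symm⟩,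
      ⟨6, h.symm⟩, ⟨7, h.symm⟩]

variable {Ω : Type*} [MeasurableSpace Ω] (μ : Measure Ω) [IsProbabilityMeasure μ]
  (Z : ℕ → Ω → ℝ × ℝ) (hZmeas : ∀ i, Measurable (Z i))
  (hindep : iIndepFun Z μ)
  (ν : Measure (ℝ × ℝ)) (hlaw : ∀ i, Measure.map (Z i) μ = ν)
  (τstar : ℝ)
  (hτstar : τstar = ∫ p : (ℝ × ℝ) × (ℝ × ℝ), kern p.1 p.2 ∂(ν.prod ν))

include Z hZmeas ν hlaw hτstar in
theorem tau_bound : |τstar| ≤ 1 := by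
  have hν : IsProbabilityMeasure ν := by
    rw [← hlaw 0]; exact Measure.isProbabilityMeasure_map (hZmeas 0).aemeasurable
  rw [hτstar]
  have h := norm_integral_le_of_norm_le_const (μ := ν.prod ν)
    (f := fun p : (ℝ × ℝ) × (ℝ × ℝ) => kern p.1 p.2) (C := 1)
    (ae_of_all _ fun q => by rw [Real.norm_eq_abs]; exact abs_kern_le q.1 q.2)
  rw [Real.norm_eq_abs] at h
  simpa using h


lemma hdisj_conv : ∀ (a b c d e f x y : ℕ),
    Disjoint ({x, y} : Finset ℕ) (({a, b} : Finset ℕ) ∪ {c, d} ∪ {e, f}) →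
    Disjoint ({x, y} : Finset ℕ) ({a, b, c, d, e, f} : Finset ℕ) := by
  intro a b c d e f x y h
  rw [Finset.disjoint_left] at h ⊢
  intro u hu
  have := h hu
  simp only [Finset.mem_union, Finset.mem_insert, Finset.mem_singleton] at this ⊢
  tauto

include Z hZmeas hindep ν hlaw hτstar in
theorem integral_G_zero (t : Tup) (hlt1 : t.1.1 < t.1.2) (hlt2 : t.2.1.1 < t.2.1.2)
    (hlt3 : t.2.2.1.1 < t.2.2.1.2) (hlt4 : t.2.2.2.1 < t.2.2.2.2)
    (hc : ¬ ((verts t).card ≤ 6)) :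
    ∫ ω, (kern (Z t.1.1 ω) (Z t.1.2 ω) - τstar) *
      ((kern (Z t.2.1.1 ω) (Z t.2.1.2 ω) - τstar) *
        ((kern (Z t.2.2.1.1 ω) (Z t.2.2.1.2 ω) - τstar) *
          (kern (Z t.2.2.2.1 ω) (Z t.2.2.2.2 ω) - τstar))) ∂μ = 0 := by
  have hcard : ∀ (a b : ℕ), ({a, b} : Finset ℕ).card ≤ 2 :=
    fun a b => Finset.card_insert_le _ _ |>.trans (by simp)
  have hvc : ¬ ((({t.1.1, t.1.2} : Finset ℕ) ∪ {t.2.1.1, t.2.1.2} ∪ {t.2.2.1.1, t.2.2.1.2} ∪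
      {t.2.2.2.1, t.2.2.2.2}).card ≤ 6) := by
    rw [← verts_eq]; exact hc
  have hiso : Disjoint ({t.1.1, t.1.2} : Finset ℕ)
        (({t.2.1.1, t.2.1.2} : Finset ℕ) ∪ {t.2.2.1.1, t.2.2.1.2} ∪ {t.2.2.2.1, t.2.2.2.2}) ∨
      Disjoint ({t.2.1.1, t.2.1.2} : Finset ℕ)
        (({t.1.1, t.1.2} : Finset ℕ) ∪ {t.2.2.1.1, t.2.2.1.2} ∪ {t.2.2.2.1, t.2.2.2.2}) ∨
      Disjoint ({t.2.2.1.1, t.2.2.1.2} : Finset ℕ)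
        (({t.1.1, t.1.2} : Finset ℕ) ∪ {t.2.1.1, t.2.1.2} ∪ {t.2.2.2.1, t.2.2.2.2}) ∨
      Disjoint ({t.2.2.2.1, t.2.2.2.2} : Finset ℕ)
        (({t.1.1, t.1.2} : Finset ℕ) ∪ {t.2.1.1, t.2.1.2} ∪ {t.2.2.1.1, t.2.2.1.2}) := by
    by_contra hcon
    push_neg at hcon
    exact hvc (four_sets_card_le_six _ _ _ _ (hcard _ _) (hcard _ _) (hcard _ _)
      (hcard _ _) hcon.1 hcon.2.1 hcon.2.2.1 hcon.2.2.2)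
  rcases hiso with h | h | h | h
  · exact isolated_zero μ Z hZmeas hindep ν hlaw τstar hτstar t.1 t.2.1 t.2.2.1 t.2.2.2
      (Nat.ne_of_lt hlt1) (hdisj_conv _ _ _ _ _ _ _ _ h)
  · have hz := isolated_zero μ Z hZmeas hindep ν hlaw τstar hτstar t.2.1 t.1 t.2.2.1 t.2.2.2
      (Nat.ne_of_lt hlt2) (hdisj_conv _ _ _ _ _ _ _ _ h)
    rw [← hz]; congr 1; funext ω; ring
  · have hz := isolated_zero μ Z hZmeas hindep ν hlaw τstar hτstar t.2.2.1 t.1 t.2.1 t.2.2.2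
      (Nat.ne_of_lt hlt3) (hdisj_conv _ _ _ _ _ _ _ _ h)
    rw [← hz]; congr 1; funext ω; ring
  · have hz := isolated_zero μ Z hZmeas hindep ν hlaw τstar hτstar t.2.2.2 t.1 t.2.1 t.2.2.1
      (Nat.ne_of_lt hlt4) (hdisj_conv _ _ _ _ _ _ _ _ h)
    rw [← hz]; congr 1; funext ω; ring


end Main3
section Main3b
open MeasureTheory ProbabilityTheory Filter Finset

variable {Ω : Type*} [MeasurableSpace Ω] (μ : Measure Ω) [IsProbabilityMeasure μ]
  (Z : ℕ → Ω → ℝ × ℝ) (hZmeas : ∀ i, Measurable (Z i))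
  (hindep : iIndepFun Z μ)
  (ν : Measure (ℝ × ℝ)) (hlaw : ∀ i, Measure.map (Z i) μ = ν)
  (τstar : ℝ)
  (hτstar : τstar = ∫ p : (ℝ × ℝ) × (ℝ × ℝ), kern p.1 p.2 ∂(ν.prod ν))

include Z hZmeas hindep ν hlaw hτstar in
theorem moment4 (n : ℕ) :
    ∫ ω, (∑ p ∈ pairs n, (kern (Z p.1 ω) (Z p.2 ω) - τstar))^4 ∂μ ≤
      16 * (((n+1)^6 * 6^8 : ℕ) : ℝ) := by
  classical
  have hτb : |τstar| ≤ 1 := tau_bound μ Z hZmeas ν hlaw τstar hτstar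
  set g : ℕ × ℕ → Ω → ℝ := fun p ω => kern (Z p.1 ω) (Z p.2 ω) - τstar with hg
  have habs : ∀ p ω, |g p ω| ≤ 2 := by
    intro p ω
    calc |g p ω| ≤ |kern (Z p.1 ω) (Z p.2 ω)| + |τstar| := abs_sub _ _
    _ ≤ 2 := by have := abs_kern_le (Z p.1 ω) (Z p.2 ω); linarith
  have hgm : ∀ p, Measurable (g p) := by
    intro p
    exact (kern_meas.comp ((hZmeas p.1).prodMk (hZmeas p.2))).sub measurable_const
  set A : Finset Tup := pairs n ×ˢ (pairs n ×ˢ (pairs n ×ˢ pairs n)) with hA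
  set G : Tup → Ω → ℝ := fun t ω => g t.1 ω * (g t.2.1 ω * (g t.2.2.1 ω * g t.2.2.2 ω)) with hG
  have hGm : ∀ t, Measurable (G t) := fun t =>
    (hgm _).mul ((hgm _).mul ((hgm _).mul (hgm _)))
  have hGabs : ∀ t ω, |G t ω| ≤ 16 := by
    intro t ω
    have h1 := habs t.1 ω; have h2 := habs t.2.1 ω
    have h3 := habs t.2.2.1 ω; have h4 := habs t.2.2.2 ω
    have e : |G t ω| = |g t.1 ω| * (|g t.2.1 ω| * (|g t.2.2.1 ω| * |g t.2.2.2 ω|)) := by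
      simp [hG, abs_mul]
    rw [e]
    have m34 : |g t.2.2.1 ω| * |g t.2.2.2 ω| ≤ 4 :=
      le_trans (mul_le_mul h3 h4 (abs_nonneg _) (by norm_num)) (by norm_num)
    have m234 : |g t.2.1 ω| * (|g t.2.2.1 ω| * |g t.2.2.2 ω|) ≤ 8 :=
      le_trans (mul_le_mul h2 m34 (by positivity) (by norm_num)) (by norm_num)
    exact le_trans (mul_le_mul h1 m234 (by positivity) (by norm_num)) (by norm_num)
  have hGint : ∀ t, Integrable (G t) μ := fun t =>
    bdd_integrable μ _ 16 (hGm t) (fun ω => hGabs t ω)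
  have hexp : ∀ ω, (∑ p ∈ pairs n, g p ω)^4 = ∑ t ∈ A, G t ω := by
    intro ω
    rw [hA, Finset.sum_product]
    simp only [Finset.sum_product]
    have e : (∑ p ∈ pairs n, g p ω)^4 = (∑ p ∈ pairs n, g p ω) *
        ((∑ p ∈ pairs n, g p ω) * ((∑ p ∈ pairs n, g p ω) * (∑ p ∈ pairs n, g p ω))) := by ring
    rw [e]
    simp only [Finset.sum_mul_sum, Finset.mul_sum, Finset.sum_mul]
    refine Finset.sum_congr rfl fun _ _ => Finset.sum_congr rfl fun _ _ =>
      Finset.sum_congr rfl fun _ _ => Finset.sum_congr rfl fun _ _ => by simp only [hG]; ring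
  have hswap : ∫ ω, (∑ p ∈ pairs n, g p ω)^4 ∂μ = ∑ t ∈ A, ∫ ω, G t ω ∂μ := by
    rw [show (fun ω => (∑ p ∈ pairs n, g p ω)^4) = fun ω => ∑ t ∈ A, G t ω from funext hexp]
    exact integral_finset_sum A (fun t _ => hGint t)
  have hmemA : ∀ t ∈ A, t.1 ∈ pairs n ∧ t.2.1 ∈ pairs n ∧ t.2.2.1 ∈ pairs n ∧
      t.2.2.2 ∈ pairs n := by
    intro t ht
    rw [hA, Finset.mem_product, Finset.mem_product, Finset.mem_product] at ht
    tauto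
  have hbound : ∀ t ∈ A, ∫ ω, G t ω ∂μ ≤ if (verts t).card ≤ 6 then (16:ℝ) else 0 := by
    intro t ht
    by_cases hc : (verts t).card ≤ 6
    · rw [if_pos hc]
      have h := norm_integral_le_of_norm_le_const (μ := μ) (f := G t) (C := 16)
        (ae_of_all _ fun ω => by rw [Real.norm_eq_abs]; exact hGabs t ω)
      rw [Real.norm_eq_abs] at h
      simp only [probReal_univ, mul_one] at h
      exact le_of_abs_le h
    · rw [if_neg hc]
      obtain ⟨h1, h2, h3, h4⟩ := hmemA t ht
      have hz := integral_G_zero μ Z hZmeas hindep ν hlaw τstar hτstar t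
        (mem_pairs h1).1 (mem_pairs h2).1 (mem_pairs h3).1 (mem_pairs h4).1 hc
      exact le_of_eq hz
  have hcount : (A.filter (fun t => (verts t).card ≤ 6)).card ≤ (n+1)^6 * 6^8 := by
    apply count_lemma n A
    intro t ht i
    obtain ⟨h1, h2, h3, h4⟩ := hmemA t ht
    obtain ⟨_, a1, a2⟩ := mem_pairs h1
    obtain ⟨_, b1, b2⟩ := mem_pairs h2
    obtain ⟨_, c1, c2⟩ := mem_pairs h3
    obtain ⟨_, d1, d2⟩ := mem_pairs h4
    fin_cases i <;> simpa [coords]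
  calc ∫ ω, (∑ p ∈ pairs n, g p ω)^4 ∂μ = ∑ t ∈ A, ∫ ω, G t ω ∂μ := hswap
  _ ≤ ∑ t ∈ A, (if (verts t).card ≤ 6 then (16:ℝ) else 0) := Finset.sum_le_sum hbound
  _ = ∑ t ∈ A.filter (fun t => (verts t).card ≤ 6), (16:ℝ) := (Finset.sum_filter _ _).symm
  _ = (A.filter (fun t => (verts t).card ≤ 6)).card * 16 := by
      rw [Finset.sum_const, nsmul_eq_mul]
  _ ≤ (((n+1)^6 * 6^8 : ℕ) : ℝ) * 16 := by
      exact mul_le_mul_of_nonneg_right (by exact_mod_cast hcount) (by norm_num)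
  _ = 16 * (((n+1)^6 * 6^8 : ℕ) : ℝ) := by ring

end Main3b
section Main4
open MeasureTheory ProbabilityTheory Filter Finset

lemma cardP_real {n : ℕ} (hn : 2 ≤ n) :
    (2/((n:ℝ)*((n:ℝ)-1))) * ((pairs n).card : ℝ) = 1 := by
  have h := card_pairs n
  have h1 : ((pairs n).card : ℝ) * 2 = (n:ℝ) * ((n:ℝ)-1) := by
    have : ((pairs n).card * 2 : ℕ) = (n * (n-1) : ℕ) := h
    have h2 : (((pairs n).card * 2 : ℕ) : ℝ) = ((n * (n-1) : ℕ) : ℝ) := by exact_mod_cast this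
    push_cast [Nat.cast_sub (show 1 ≤ n by omega)] at h2
    linarith
  have hx : (2:ℝ) ≤ (n:ℝ) := by exact_mod_cast hn
  have hne : (n:ℝ) * ((n:ℝ)-1) ≠ 0 := by nlinarith
  field_simp
  rw [div_eq_iff (by linarith)]
  linarith

lemma arith_bound {n : ℕ} (hn : 2 ≤ n) :
    (2/((n:ℝ)*((n:ℝ)-1)))^4 * (16 * (((n+1)^6 * 6^8 : ℕ) : ℝ)) ≤
      (2^20 * 6^8 : ℝ)/((n:ℝ)+1)^2 := by
  have hx : (2:ℝ) ≤ (n:ℝ) := by exact_mod_cast hn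
  set x := (n:ℝ) with hxdef
  have hp : (0:ℝ) < x*(x-1) := by nlinarith
  have hq : (0:ℝ) < x+1 := by linarith
  have hcast : (((n+1)^6 * 6^8 : ℕ) : ℝ) = (x+1)^6 * 6^8 := by push_cast; ring
  rw [hcast, div_pow]
  rw [div_mul_eq_mul_div, div_le_div_iff₀ (by positivity) (by positivity)]
  have key : (x+1)^2 ≤ 8*(x*(x-1)) := by nlinarith
  have key4 : ((x+1)^2)^4 ≤ (8*(x*(x-1)))^4 := pow_le_pow_left₀ (by positivity) key 4
  calc (2:ℝ)^4 * (16 * ((x+1)^6 * 6^8)) * (x+1)^2 = 2^8 * 6^8 * ((x+1)^2)^4 := by ring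
  _ ≤ 2^8 * 6^8 * (8*(x*(x-1)))^4 := by
      apply mul_le_mul_of_nonneg_left key4 (by norm_num)
  _ = 2^20 * 6^8 * (x*(x-1))^4 := by ring

lemma summable_bound : Summable (fun n : ℕ => (2^20 * 6^8 + 4 : ℝ)/((n:ℝ)+1)^2) := by
  have h1 : Summable (fun n : ℕ => 1/((n:ℝ))^2) := Real.summable_one_div_nat_pow.mpr (by norm_num)
  have h2 : Summable (fun n : ℕ => 1/((n:ℝ)+1)^2) := by
    have := (summable_nat_add_iff 1).mpr h1
    apply this.congr
    intro n
    push_cast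
    ring
  simpa [div_eq_mul_inv] using h2.mul_left (2^20 * 6^8 + 4 : ℝ)

end Main4
open MeasureTheory ProbabilityTheory Filter Finset in
/-- Consistency of the sample Kendall's tau: for an i.i.d. sequence of random
vectors `Z i = (U i, V i)` in `ℝ²` with common law `ν`, the sample Kendall's tau
converges almost surely (hence in probability) to the population Kendall's tau. -/
theorem kendall_tau_consistency
    {Ω : Type*} [MeasurableSpace Ω] (μ : Measure Ω) [IsProbabilityMeasure μ]
    (Z : ℕ → Ω → ℝ × ℝ)
    (hZmeas : ∀ i, Measurable (Z i))
    (hindep : iIndepFun Z μ)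
    (ν : Measure (ℝ × ℝ))
    (hlaw : ∀ i, Measure.map (Z i) μ = ν)
    (τhat : ℕ → Ω → ℝ)
    (hτhat : ∀ n ω, τhat n ω =
      (2 / (n * (n - 1) : ℝ)) *
        ∑ i ∈ Finset.range n, ∑ j ∈ Finset.Ioo i n,
          Real.sign (((Z i ω).1 - (Z j ω).1) * ((Z i ω).2 - (Z j ω).2)))
    (τstar : ℝ)
    (hτstar : τstar =
      ∫ p : (ℝ × ℝ) × (ℝ × ℝ),
        Real.sign ((p.1.1 - p.2.1) * (p.1.2 - p.2.2)) ∂(ν.prod ν)) :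
    (∀ᵐ ω ∂μ, Tendsto (fun n => τhat n ω) atTop (nhds τstar)) ∧
      TendstoInMeasure μ τhat atTop (fun _ => τstar) := by
  classical
  have hτ' : τstar = ∫ p : (ℝ × ℝ) × (ℝ × ℝ), kern p.1 p.2 ∂(ν.prod ν) := hτstar
  have hτhat' : ∀ n ω, τhat n ω =
      (2 / ((n:ℝ) * ((n:ℝ) - 1))) * ∑ i ∈ Finset.range n, ∑ j ∈ Finset.Ioo i n,
        kern (Z i ω) (Z j ω) := hτhat
  have hτb : |τstar| ≤ 1 := tau_bound μ Z hZmeas ν hlaw τstar hτ'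
  set S : ℕ → Ω → ℝ := fun n ω => ∑ p ∈ pairs n, (kern (Z p.1 ω) (Z p.2 ω) - τstar) with hS
  set D : ℕ → Ω → ℝ := fun n ω => τhat n ω - τstar with hD
  have hgabs : ∀ (i j : ℕ) (ω : Ω), |kern (Z i ω) (Z j ω) - τstar| ≤ 2 := by
    intro i j ω
    calc |kern (Z i ω) (Z j ω) - τstar| ≤ |kern (Z i ω) (Z j ω)| + |τstar| := abs_sub _ _
    _ ≤ 2 := by have := abs_kern_le (Z i ω) (Z j ω); linarith
  have hgm : ∀ (i j : ℕ), Measurable (fun ω => kern (Z i ω) (Z j ω) - τstar) := fun i j =>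
    (kern_meas.comp ((hZmeas i).prodMk (hZmeas j))).sub measurable_const
  have hSabs : ∀ n ω, |S n ω| ≤ 2 * (pairs n).card := by
    intro n ω
    calc |S n ω| ≤ ∑ p ∈ pairs n, |kern (Z p.1 ω) (Z p.2 ω) - τstar| :=
      Finset.abs_sum_le_sum_abs _ _
    _ ≤ ∑ p ∈ pairs n, 2 := Finset.sum_le_sum (fun p _ => hgabs p.1 p.2 ω)
    _ = 2 * (pairs n).card := by rw [Finset.sum_const, nsmul_eq_mul]; ring
  have hid : ∀ n, 2 ≤ n → ∀ ω, D n ω = (2/((n:ℝ)*((n:ℝ)-1))) * S n ω := by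
    intro n hn ω
    have e1 : τhat n ω = (2/((n:ℝ)*((n:ℝ)-1))) * ∑ p ∈ pairs n, kern (Z p.1 ω) (Z p.2 ω) := by
      rw [hτhat' n ω]
      congr 1
      exact (sum_pairs n (fun i j => kern (Z i ω) (Z j ω))).symm
    have e2 : S n ω = (∑ p ∈ pairs n, kern (Z p.1 ω) (Z p.2 ω)) - (pairs n).card * τstar := by
      simp only [hS]
      rw [Finset.sum_sub_distrib, Finset.sum_const, nsmul_eq_mul]
    have e3 := cardP_real hn
    simp only [hD]
    rw [e1, e2]
    calc (2/((n:ℝ)*((n:ℝ)-1))) * ∑ p ∈ pairs n, kern (Z p.1 ω) (Z p.2 ω) - τstar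
        = (2/((n:ℝ)*((n:ℝ)-1))) * ∑ p ∈ pairs n, kern (Z p.1 ω) (Z p.2 ω) -
          ((2/((n:ℝ)*((n:ℝ)-1))) * ((pairs n).card : ℝ)) * τstar := by rw [e3]; ring
    _ = (2/((n:ℝ)*((n:ℝ)-1))) *
          ((∑ p ∈ pairs n, kern (Z p.1 ω) (Z p.2 ω)) - (pairs n).card * τstar) := by ring
  have hsmall : ∀ n, n < 2 → ∀ ω, τhat n ω = 0 := by
    intro n hn ω
    interval_cases n <;> simp [hτhat' _ ω]
  have hτhatmeas : ∀ n, Measurable (τhat n) := by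
    intro n
    have h : τhat n = fun ω => (2 / ((n:ℝ) * ((n:ℝ) - 1))) *
        ∑ i ∈ Finset.range n, ∑ j ∈ Finset.Ioo i n, kern (Z i ω) (Z j ω) :=
      funext (hτhat' n)
    rw [h]
    exact measurable_const.mul (Finset.measurable_sum _ (fun i _ =>
      Finset.measurable_sum _ (fun j _ => kern_meas.comp ((hZmeas i).prodMk (hZmeas j)))))
  have hDmeas : ∀ n, Measurable (D n) := fun n => (hτhatmeas n).sub measurable_const
  have hDb : ∀ n, ∃ B : ℝ, ∀ ω, |D n ω| ≤ B := by
    intro n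
    by_cases hn : 2 ≤ n
    · refine ⟨|2/((n:ℝ)*((n:ℝ)-1))| * (2 * (pairs n).card), fun ω => ?_⟩
      rw [hid n hn ω, abs_mul]
      exact mul_le_mul_of_nonneg_left (hSabs n ω) (abs_nonneg _)
    · refine ⟨1, fun ω => ?_⟩
      have : D n ω = 0 - τstar := by
        show τhat n ω - τstar = 0 - τstar
        rw [hsmall n (by omega) ω]
      rw [this]
      simpa using hτb
  have hDint4 : ∀ n, Integrable (fun ω => (D n ω)^4) μ := by
    intro n
    obtain ⟨B, hB⟩ := hDb n
    apply bdd_integrable μ _ (|B|^4) ((hDmeas n).pow_const 4)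
    intro ω
    rw [show |(D n ω)^4| = |D n ω|^4 from abs_pow _ _]
    exact pow_le_pow_left₀ (abs_nonneg _) (le_trans (hB ω) (le_abs_self B)) 4
  have hInt : ∀ n, ∫ ω, (D n ω)^4 ∂μ ≤ (2^20 * 6^8 + 4 : ℝ)/((n:ℝ)+1)^2 := by
    intro n
    by_cases hn : 2 ≤ n
    · have heq : ∫ ω, (D n ω)^4 ∂μ =
          (2/((n:ℝ)*((n:ℝ)-1)))^4 * ∫ ω, (S n ω)^4 ∂μ := by
        rw [← integral_const_mul]
        congr 1
        funext ω
        rw [hid n hn ω]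
        ring
      have h1 : ∫ ω, (S n ω)^4 ∂μ ≤ 16 * (((n+1)^6 * 6^8 : ℕ) : ℝ) :=
        moment4 μ Z hZmeas hindep ν hlaw τstar hτ' n
      have h2 : (0:ℝ) ≤ (2/((n:ℝ)*((n:ℝ)-1)))^4 := by positivity
      calc ∫ ω, (D n ω)^4 ∂μ = (2/((n:ℝ)*((n:ℝ)-1)))^4 * ∫ ω, (S n ω)^4 ∂μ := heq
      _ ≤ (2/((n:ℝ)*((n:ℝ)-1)))^4 * (16 * (((n+1)^6 * 6^8 : ℕ) : ℝ)) :=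
          mul_le_mul_of_nonneg_left h1 h2
      _ ≤ (2^20 * 6^8 : ℝ)/((n:ℝ)+1)^2 := arith_bound hn
      _ ≤ (2^20 * 6^8 + 4 : ℝ)/((n:ℝ)+1)^2 := by gcongr <;> norm_num
    · have hτ0 : ∀ ω, D n ω = 0 - τstar := fun ω => by
        show τhat n ω - τstar = 0 - τstar
        rw [hsmall n (by omega) ω]
      have he : (fun ω => (D n ω)^4) = fun _ => τstar^4 := funext fun ω => by
        rw [hτ0 ω]; ring
      rw [he, integral_const]
      simp only [probReal_univ, smul_eq_mul, one_mul]
      have h1 : τstar^4 ≤ 1 := by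
        have h := pow_le_one₀ (abs_nonneg τstar) hτb (n := 4)
        calc τstar^4 = |τstar|^4 := by rw [← abs_pow]; rw [abs_of_nonneg (by positivity)]
        _ ≤ 1 := h
      have h3 : (0:ℝ) < ((n:ℝ)+1)^2 := by positivity
      rw [le_div_iff₀ h3]
      have h2 : ((n:ℝ)+1)^2 ≤ 4 := by
        interval_cases n <;> norm_num
      nlinarith [pow_nonneg (sq_nonneg τstar) 2]
  set F : ℕ → Ω → ENNReal := fun n ω => ENNReal.ofReal ((D n ω)^4) with hF
  have hFmeas : ∀ n, Measurable (F n) := fun n => ((hDmeas n).pow_const 4).ennreal_ofReal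
  have hFint : ∀ n, ∫⁻ ω, F n ω ∂μ = ENNReal.ofReal (∫ ω, (D n ω)^4 ∂μ) := fun n =>
    (ofReal_integral_eq_lintegral_ofReal (hDint4 n) (ae_of_all _ fun ω => by positivity)).symm
  have htop : (∑' n, ∫⁻ ω, F n ω ∂μ) ≠ ⊤ := by
    have hb : ∀ n, ∫⁻ ω, F n ω ∂μ ≤ ENNReal.ofReal ((2^20 * 6^8 + 4 : ℝ)/((n:ℝ)+1)^2) := by
      intro n
      rw [hFint n]
      exact ENNReal.ofReal_le_ofReal (hInt n)
    apply ne_top_of_le_ne_top ?_ (ENNReal.tsum_le_tsum hb)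
    rw [← ENNReal.ofReal_tsum_of_nonneg (fun n => by positivity) summable_bound]
    exact ENNReal.ofReal_ne_top
  have hlt : ∀ᵐ ω ∂μ, (∑' n, F n ω) < ⊤ := by
    apply ae_lt_top (Measurable.ennreal_tsum hFmeas)
    rw [lintegral_tsum (fun n => (hFmeas n).aemeasurable)]
    exact htop
  have hAS : ∀ᵐ ω ∂μ, Tendsto (fun n => τhat n ω) atTop (nhds τstar) := by
    filter_upwards [hlt] with ω hω
    have h0 : Tendsto (fun n => F n ω) atTop (nhds 0) :=
      ENNReal.tendsto_atTop_zero_of_tsum_ne_top hω.ne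
    have h1 : Tendsto (fun n => (D n ω)^4) atTop (nhds 0) := by
      have he : (fun n => (D n ω)^4) = fun n => (F n ω).toReal := funext fun n => by
        rw [hF]; rw [ENNReal.toReal_ofReal (by positivity)]
      rw [he]
      have := (ENNReal.tendsto_toReal (by simp : (0:ENNReal) ≠ ⊤)).comp h0
      simpa [Function.comp_def] using this
    have h2 : Tendsto (fun n => |D n ω|) atTop (nhds 0) := by
      have he : (fun n => |D n ω|) = fun n => ((D n ω)^4)^((1:ℝ)/4) := funext fun n => by
        rw [show ((D n ω)^4 : ℝ) = |D n ω|^(4:ℕ) from by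
          rw [← abs_pow]; rw [abs_of_nonneg (by positivity)]]
        rw [← Real.rpow_natCast |D n ω| 4, ← Real.rpow_mul (abs_nonneg _)]
        norm_num
      rw [he]
      have hc : ContinuousAt (fun x : ℝ => x^((1:ℝ)/4)) 0 :=
        Real.continuousAt_rpow_const 0 _ (Or.inr (by norm_num))
      have := hc.tendsto.comp h1
      simpa [Function.comp_def, Real.zero_rpow (by norm_num : (1:ℝ)/4 ≠ 0)] using this
    have h3 : Tendsto (fun n => D n ω) atTop (nhds 0) :=
      squeeze_zero_norm (fun n => le_of_eq (Real.norm_eq_abs _)) h2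
    have h4 : (fun n => τhat n ω) = fun n => D n ω + τstar := funext fun n => by
      show τhat n ω = τhat n ω - τstar + τstar
      ring
    rw [h4]
    simpa using h3.add (tendsto_const_nhds (x := τstar))
  exact ⟨hAS, tendstoInMeasure_of_tendsto_ae
    (fun n => (hτhatmeas n).aestronglyMeasurable) hAS⟩
end

section
/- (Slutsky's theorem, ratio form.) Let (Ω, μ) be a probability space, let (X_n) and (Y_n) be sequences of real random variables on Ω, let μ₀ be a probability measure on ℝ, and let c ∈ ℝ with c ≠ 0. Suppose the laws of X_n converge weakly to μ₀, each Y_n is almost surely nonzero, and Y_n → c in probability. Then the laws of X_n / Y_n converge weakly to the pushforward of μ₀ under the map x ↦ x/c. -/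
open MeasureTheory Filter

/-- Weak convergence of a sequence of laws on `ℝ`: integrals of every bounded
continuous function converge. -/
def WeakConvergence (μs : ℕ → Measure ℝ) (μ₀ : Measure ℝ) : Prop :=
  ∀ f : BoundedContinuousFunction ℝ ℝ,
    Tendsto (fun n => ∫ x, f x ∂(μs n)) atTop (nhds (∫ x, f x ∂μ₀))


/-- A continuous cutoff: `0` for `|x| ≤ m`, `1` for `m + 1 ≤ |x|`, in `[0,1]`. -/
noncomputable def slutskyCutoff (m : ℝ) : BoundedContinuousFunction ℝ ℝ :=
  ⟨⟨fun x => min 1 (max (|x| - m) 0), by fun_prop⟩, 1, by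
    intro x y
    have h1 : 0 ≤ min 1 (max (|x| - m) 0) := le_min one_pos.le (le_max_right _ _)
    have h2 : min 1 (max (|x| - m) 0) ≤ 1 := min_le_left _ _
    have h3 : 0 ≤ min 1 (max (|y| - m) 0) := le_min one_pos.le (le_max_right _ _)
    have h4 : min 1 (max (|y| - m) 0) ≤ 1 := min_le_left _ _
    rw [Real.dist_eq, abs_sub_le_iff]
    constructor <;> linarith⟩

lemma slutskyCutoff_apply (m x : ℝ) :
    slutskyCutoff m x = min 1 (max (|x| - m) 0) := rfl

lemma slutskyCutoff_eq_one {m x : ℝ} (h : m + 1 ≤ |x|) : slutskyCutoff m x = 1 := by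
  rw [slutskyCutoff_apply]
  have : (1:ℝ) ≤ |x| - m := by linarith
  rw [max_eq_left (by linarith), min_eq_left this]

lemma slutskyCutoff_le_indicator (m : ℝ) (x : ℝ) :
    slutskyCutoff m x ≤ Set.indicator {y : ℝ | m < |y|} 1 x := by
  rw [slutskyCutoff_apply]
  by_cases h : m < |x|
  · simp only [Set.indicator_of_mem (show x ∈ {y : ℝ | m < |y|} from h)]
    exact (min_le_left _ _).trans (by norm_num)
  · simp only [Set.indicator_of_notMem (show x ∉ {y : ℝ | m < |y|} from h)]
    push_neg at h
    rw [max_eq_right (by linarith : |x| - m ≤ 0)]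
    simp

lemma indicator_le_slutskyCutoff (m : ℝ) (x : ℝ) :
    Set.indicator {y : ℝ | m + 1 ≤ |y|} 1 x ≤ slutskyCutoff m x := by
  by_cases h : m + 1 ≤ |x|
  · rw [Set.indicator_of_mem (show x ∈ {y : ℝ | m + 1 ≤ |y|} from h), slutskyCutoff_eq_one h]; rfl
  · rw [Set.indicator_of_notMem (show x ∉ {y : ℝ | m + 1 ≤ |y|} from h), slutskyCutoff_apply]
    exact le_min one_pos.le (le_max_right _ _)


lemma slutsky_tight {μs : ℕ → Measure ℝ} [∀ n, IsProbabilityMeasure (μs n)]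
    {μ₀ : Measure ℝ} [IsProbabilityMeasure μ₀]
    (h : WeakConvergence μs μ₀) {t : ℝ} (ht : 0 < t) :
    ∃ M : ℝ, 0 < M ∧ ∀ᶠ n in atTop, ((μs n) {x | M ≤ |x|}).toReal < t := by
  -- sets shrinking to ∅
  set s : ℕ → Set ℝ := fun k => {x : ℝ | (k : ℝ) < |x|} with hs
  have hsm : ∀ k, MeasurableSet (s k) := fun k =>
    (isOpen_lt continuous_const continuous_abs).measurableSet
  have hanti : Antitone s := by
    intro a b hab x hx
    simp only [hs, Set.mem_setOf_eq] at *
    exact lt_of_le_of_lt (by exact_mod_cast hab) hx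
  have hinter : ⋂ k, s k = ∅ := by
    ext x
    simp only [Set.mem_iInter, Set.mem_empty_iff_false, iff_false, not_forall]
    obtain ⟨k, hk⟩ := exists_nat_gt |x|
    exact ⟨k, by simp [hs]; linarith⟩
  have htend : Tendsto (fun k => μ₀ (s k)) atTop (nhds 0) := by
    have := MeasureTheory.tendsto_measure_iInter_atTop
      (μ := μ₀) (fun k => (hsm k).nullMeasurableSet) hanti ⟨0, measure_ne_top _ _⟩
    rwa [hinter, measure_empty] at this
  have : ∀ᶠ k in atTop, μ₀ (s k) < ENNReal.ofReal (t / 2) :=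
    htend.eventually (gt_mem_nhds (by positivity))
  obtain ⟨k, hk⟩ := this.exists
  have hkR : (μ₀ (s k)).toReal < t / 2 :=
    (ENNReal.lt_ofReal_iff_toReal_lt (measure_ne_top _ _)).mp hk
  refine ⟨(k : ℝ) + 1, by positivity, ?_⟩
  -- compare with the cutoff function
  set g := slutskyCutoff (k : ℝ) with hg
  have hg_int : ∀ (ν : Measure ℝ) [IsProbabilityMeasure ν], Integrable (⇑g) ν := by
    intro ν _; exact g.integrable ν
  have hg0 : ∫ x, g x ∂μ₀ < t / 2 := by
    have hle : ∫ x, g x ∂μ₀ ≤ (μ₀ (s k)).toReal := by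
      rw [← Measure.real_def, ← MeasureTheory.integral_indicator_one (hsm k)]
      exact integral_mono (hg_int μ₀)
        ((integrable_const (1:ℝ)).indicator (hsm k)) (slutskyCutoff_le_indicator _)
    linarith
  have := (h g).eventually (gt_mem_nhds (show ∫ x, g x ∂μ₀ < t from by linarith))
  filter_upwards [this] with n hn
  have hmeas : MeasurableSet {x : ℝ | (k : ℝ) + 1 ≤ |x|} :=
    (isClosed_le continuous_const continuous_abs).measurableSet
  have hle : ((μs n) {x | (k:ℝ) + 1 ≤ |x|}).toReal ≤ ∫ x, g x ∂(μs n) := by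
    rw [← Measure.real_def, ← MeasureTheory.integral_indicator_one hmeas]
    exact integral_mono ((integrable_const (1:ℝ)).indicator hmeas)
      (hg_int (μs n)) (indicator_le_slutskyCutoff _)
  linarith

set_option maxHeartbeats 1000000 in


/-- Pointwise estimate used in Slutsky's theorem. -/
lemma slutsky_pointwise {c x y M δ₁ : ℝ} (hc : c ≠ 0) (hM : 0 < M) (hδ₁ : 0 < δ₁)
    (hx : |x| < M) (hyc : |y - c| < min (|c| / 2) (δ₁ * c ^ 2 / (4 * M))) :
    x / y ∈ Set.Icc (-(2 * M / |c| + 1)) (2 * M / |c| + 1) ∧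
    x / c ∈ Set.Icc (-(2 * M / |c| + 1)) (2 * M / |c| + 1) ∧
    |x / y - x / c| < δ₁ := by
  have hcpos : 0 < |c| := abs_pos.mpr hc
  have hc2 : 0 < c ^ 2 := by positivity
  have hyc1 : |y - c| < |c| / 2 := lt_of_lt_of_le hyc (min_le_left _ _)
  have hyc2 : |y - c| < δ₁ * c ^ 2 / (4 * M) := lt_of_lt_of_le hyc (min_le_right _ _)
  have hyabs : |c| / 2 < |y| := by
    have h1 : |c| - |y| ≤ |c - y| := abs_sub_abs_le_abs_sub c y
    have h2 : |c - y| = |y - c| := abs_sub_comm c y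
    linarith
  have hy0 : y ≠ 0 := by
    intro h; rw [h, abs_zero] at hyabs; linarith
  have h2M : M / (|c| / 2) = 2 * M / |c| := by
    field_simp
  refine ⟨?_, ?_, ?_⟩
  · rw [Set.mem_Icc, ← abs_le, abs_div]
    have h1 : |x| / |y| ≤ M / (|c| / 2) :=
      div_le_div₀ hM.le hx.le (by positivity) hyabs.le
    rw [h2M] at h1
    linarith
  · rw [Set.mem_Icc, ← abs_le, abs_div]
    have h1 : |x| / |c| ≤ 2 * M / |c| :=
      div_le_div₀ (by positivity) (by linarith) hcpos le_rfl
    linarith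
  · have heq : x / y - x / c = x * (c - y) / (y * c) := by
      field_simp
    have habs : |x / y - x / c| = |x| * |c - y| / (|y| * |c|) := by
      rw [heq, abs_div, abs_mul, abs_mul]
    have hnum : |x| * |c - y| ≤ M * (δ₁ * c ^ 2 / (4 * M)) := by
      have hcy : |c - y| ≤ δ₁ * c ^ 2 / (4 * M) := by
        rw [abs_sub_comm]; exact hyc2.le
      exact mul_le_mul hx.le hcy (abs_nonneg _) hM.le
    have hnum' : M * (δ₁ * c ^ 2 / (4 * M)) = δ₁ * c ^ 2 / 4 := by
      field_simp
    have hden : c ^ 2 / 2 ≤ |y| * |c| := by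
      have hsq : |c| * |c| = c ^ 2 := by rw [← sq_abs]; ring
      nlinarith [hyabs, hcpos]
    have hq : |x / y - x / c| ≤ (δ₁ * c ^ 2 / 4) / (c ^ 2 / 2) := by
      rw [habs]
      exact div_le_div₀ (by positivity) (hnum'.le.trans' hnum) (by positivity) hden
    have hq2 : (δ₁ * c ^ 2 / 4) / (c ^ 2 / 2) < δ₁ := by
      rw [div_lt_iff₀ (by positivity)]
      nlinarith [mul_pos hδ₁ hc2]
    exact lt_of_le_of_lt hq hq2

/-- Integral estimate for one index, used in Slutsky's theorem. -/
lemma slutsky_integral_step {Ω : Type*} [MeasurableSpace Ω] (μ : Measure Ω)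
    [IsProbabilityMeasure μ] (f : BoundedContinuousFunction ℝ ℝ)
    {Xn Yn : Ω → ℝ} (hX : Measurable Xn) (hY : Measurable Yn) (c : ℝ)
    {M δ ε : ℝ} (hε : 0 < ε)
    (hgood : ∀ ω, |Xn ω| < M → dist (Yn ω) c < δ →
      ‖f (Xn ω / Yn ω) - f (Xn ω / c)‖ ≤ ε / 4) :
    ‖∫ ω, f (Xn ω / Yn ω) ∂μ - ∫ ω, f (Xn ω / c) ∂μ‖ ≤
      2 * ‖f‖ * ((μ {ω | M ≤ |Xn ω|}).toReal + (μ {ω | δ ≤ dist (Yn ω) c}).toReal)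
        + ε / 4 := by
  have hS₁m : MeasurableSet {ω | M ≤ |Xn ω|} :=
    measurableSet_le measurable_const hX.abs
  have hS₂m : MeasurableSet {ω | δ ≤ dist (Yn ω) c} :=
    measurableSet_le measurable_const (hY.dist measurable_const)
  have hSm : MeasurableSet ({ω | M ≤ |Xn ω|} ∪ {ω | δ ≤ dist (Yn ω) c}) := hS₁m.union hS₂m
  have hd1meas : AEStronglyMeasurable (fun ω => f (Xn ω / Yn ω)) μ :=
    (f.continuous.measurable.comp (hX.div hY)).aestronglyMeasurable
  have hd2meas : AEStronglyMeasurable (fun ω => f (Xn ω / c)) μ :=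
    (f.continuous.measurable.comp (hX.div_const c)).aestronglyMeasurable
  have hint1 : Integrable (fun ω => f (Xn ω / Yn ω)) μ :=
    Integrable.mono' (integrable_const ‖f‖) hd1meas
      (Filter.Eventually.of_forall fun ω => f.norm_coe_le_norm _)
  have hint2 : Integrable (fun ω => f (Xn ω / c)) μ :=
    Integrable.mono' (integrable_const ‖f‖) hd2meas
      (Filter.Eventually.of_forall fun ω => f.norm_coe_le_norm _)
  have hdint : Integrable (fun ω => f (Xn ω / Yn ω) - f (Xn ω / c)) μ := hint1.sub hint2
  have hdb : ∀ ω, ‖f (Xn ω / Yn ω) - f (Xn ω / c)‖ ≤ 2 * ‖f‖ := by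
    intro ω
    have h1 := f.norm_coe_le_norm (Xn ω / Yn ω)
    have h2 := f.norm_coe_le_norm (Xn ω / c)
    calc ‖f (Xn ω / Yn ω) - f (Xn ω / c)‖
        ≤ ‖f (Xn ω / Yn ω)‖ + ‖f (Xn ω / c)‖ := norm_sub_le _ _
      _ ≤ 2 * ‖f‖ := by linarith
  rw [← integral_sub hint1 hint2,
    ← integral_add_compl hSm hdint]
  have hb1 : ‖∫ ω in {ω | M ≤ |Xn ω|} ∪ {ω | δ ≤ dist (Yn ω) c},
      (f (Xn ω / Yn ω) - f (Xn ω / c)) ∂μ‖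
      ≤ 2 * ‖f‖ * (μ ({ω | M ≤ |Xn ω|} ∪ {ω | δ ≤ dist (Yn ω) c})).toReal :=
    norm_setIntegral_le_of_norm_le_const (measure_lt_top μ _) (fun ω _ => hdb ω)
  have hb2 : ‖∫ ω in ({ω | M ≤ |Xn ω|} ∪ {ω | δ ≤ dist (Yn ω) c})ᶜ,
      (f (Xn ω / Yn ω) - f (Xn ω / c)) ∂μ‖ ≤ ε / 4 * (μ (({ω | M ≤ |Xn ω|} ∪ {ω | δ ≤ dist (Yn ω) c})ᶜ)).toReal := by
    refine norm_setIntegral_le_of_norm_le_const (measure_lt_top μ _) ?_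
    intro ω hω
    simp only [Set.compl_union, Set.mem_inter_iff, Set.mem_compl_iff, Set.mem_setOf_eq,
      not_le] at hω
    exact hgood ω hω.1 hω.2
  have hμS : (μ ({ω | M ≤ |Xn ω|} ∪ {ω | δ ≤ dist (Yn ω) c})).toReal
      ≤ (μ {ω | M ≤ |Xn ω|}).toReal + (μ {ω | δ ≤ dist (Yn ω) c}).toReal := by
    have hle : μ ({ω | M ≤ |Xn ω|} ∪ {ω | δ ≤ dist (Yn ω) c})
        ≤ μ {ω | M ≤ |Xn ω|} + μ {ω | δ ≤ dist (Yn ω) c} := measure_union_le _ _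
    have h2 := ENNReal.toReal_mono
      (ENNReal.add_ne_top.mpr ⟨measure_ne_top _ _, measure_ne_top _ _⟩) hle
    rwa [ENNReal.toReal_add (measure_ne_top _ _) (measure_ne_top _ _)] at h2
  have hμSc : (μ (({ω | M ≤ |Xn ω|} ∪ {ω | δ ≤ dist (Yn ω) c})ᶜ)).toReal ≤ 1 := by
    have h1 := ENNReal.toReal_mono (measure_ne_top μ Set.univ)
      (measure_mono (Set.subset_univ (({ω | M ≤ |Xn ω|} ∪ {ω | δ ≤ dist (Yn ω) c})ᶜ)))
    simpa using h1
  have hsc : ε / 4 * (μ (({ω | M ≤ |Xn ω|} ∪ {ω | δ ≤ dist (Yn ω) c})ᶜ)).toReal ≤ ε / 4 :=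
    mul_le_of_le_one_right (by positivity) hμSc
  have hf0 : (0:ℝ) ≤ 2 * ‖f‖ := by positivity
  have hb2' : ‖∫ ω in ({ω | M ≤ |Xn ω|} ∪ {ω | δ ≤ dist (Yn ω) c})ᶜ,
      (f (Xn ω / Yn ω) - f (Xn ω / c)) ∂μ‖ ≤ ε / 4 := hb2.trans hsc
  calc ‖(∫ ω in {ω | M ≤ |Xn ω|} ∪ {ω | δ ≤ dist (Yn ω) c},
        (f (Xn ω / Yn ω) - f (Xn ω / c)) ∂μ)
      + ∫ ω in ({ω | M ≤ |Xn ω|} ∪ {ω | δ ≤ dist (Yn ω) c})ᶜ,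
        (f (Xn ω / Yn ω) - f (Xn ω / c)) ∂μ‖
      ≤ ‖∫ ω in {ω | M ≤ |Xn ω|} ∪ {ω | δ ≤ dist (Yn ω) c},
        (f (Xn ω / Yn ω) - f (Xn ω / c)) ∂μ‖
      + ‖∫ ω in ({ω | M ≤ |Xn ω|} ∪ {ω | δ ≤ dist (Yn ω) c})ᶜ,
        (f (Xn ω / Yn ω) - f (Xn ω / c)) ∂μ‖ := norm_add_le _ _
    _ ≤ 2 * ‖f‖ * (μ ({ω | M ≤ |Xn ω|} ∪ {ω | δ ≤ dist (Yn ω) c})).toReal + ε / 4 :=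
        add_le_add hb1 hb2'
    _ ≤ 2 * ‖f‖ * ((μ {ω | M ≤ |Xn ω|}).toReal + (μ {ω | δ ≤ dist (Yn ω) c}).toReal)
        + ε / 4 := by
        have := mul_le_mul_of_nonneg_left hμS hf0
        linarith

/-- Slutsky's theorem (ratio form): if the laws of `X n` converge weakly to
`μ₀`, each `Y n` is a.s. nonzero, and `Y n → c ≠ 0` in probability, then the
laws of `X n / Y n` converge weakly to the pushforward of `μ₀` under
`x ↦ x / c`. -/
theorem slutsky_ratio
    {Ω : Type*} [MeasurableSpace Ω] (μ : Measure Ω) [IsProbabilityMeasure μ]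
    (X Y : ℕ → Ω → ℝ)
    (hXmeas : ∀ n, Measurable (X n))
    (hYmeas : ∀ n, Measurable (Y n))
    (μ₀ : Measure ℝ) [IsProbabilityMeasure μ₀]
    (c : ℝ) (hc : c ≠ 0)
    (hXweak : WeakConvergence (fun n => Measure.map (X n) μ) μ₀)
    (hYne : ∀ n, ∀ᵐ ω ∂μ, Y n ω ≠ 0)
    (hYprob : TendstoInMeasure μ Y atTop (fun _ => c)) :
    WeakConvergence
      (fun n => Measure.map (fun ω => X n ω / Y n ω) μ)
      (Measure.map (fun x => x / c) μ₀) := by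
  intro f
  have hcpos : 0 < |c| := abs_pos.mpr hc
  have hdivc : Continuous fun x : ℝ => x / c := continuous_id.div_const c
  have hXYmeas : ∀ n, Measurable fun ω => X n ω / Y n ω :=
    fun n => (hXmeas n).div (hYmeas n)
  have hL : ∫ x, f x ∂(Measure.map (fun x => x / c) μ₀) = ∫ x, f (x / c) ∂μ₀ :=
    integral_map hdivc.measurable.aemeasurable f.continuous.measurable.aestronglyMeasurable
  have hI : ∀ n, ∫ x, f x ∂(Measure.map (fun ω => X n ω / Y n ω) μ)
      = ∫ ω, f (X n ω / Y n ω) ∂μ :=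
    fun n => integral_map (hXYmeas n).aemeasurable f.continuous.measurable.aestronglyMeasurable
  have hJ : Tendsto (fun n => ∫ ω, f (X n ω / c) ∂μ) atTop (nhds (∫ x, f (x / c) ∂μ₀)) := by
    have h := hXweak (f.compContinuous ⟨fun x => x / c, hdivc⟩)
    have hJn : ∀ n, ∫ x, (f.compContinuous ⟨fun x => x / c, hdivc⟩) x ∂(Measure.map (X n) μ)
        = ∫ ω, f (X n ω / c) ∂μ :=
      fun n => integral_map (hXmeas n).aemeasurable
        (f.compContinuous ⟨fun x => x / c, hdivc⟩).continuous.measurable.aestronglyMeasurable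
    simp only [hJn] at h
    exact h
  simp only [hI, hL]
  have hdiff : Tendsto
      (fun n => ∫ ω, f (X n ω / Y n ω) ∂μ - ∫ ω, f (X n ω / c) ∂μ) atTop (nhds 0) := by
    rw [NormedAddCommGroup.tendsto_nhds_zero]
    intro ε hε
    have hf0 : (0:ℝ) ≤ ‖f‖ := norm_nonneg f
    have ht : 0 < ε / (8 * (‖f‖ + 1)) := by positivity
    haveI : ∀ n : ℕ, IsProbabilityMeasure ((fun n => Measure.map (X n) μ) n) :=
      fun n => Measure.isProbabilityMeasure_map (hXmeas n).aemeasurable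
    obtain ⟨M, hM, hMev⟩ := slutsky_tight hXweak ht
    obtain ⟨δ₁, hδ₁, hucδ⟩ := Metric.uniformContinuousOn_iff.mp
      ((isCompact_Icc (a := -(2 * M / |c| + 1)) (b := 2 * M / |c| + 1)).uniformContinuousOn_of_continuous
        f.continuous.continuousOn) (ε / 4) (by positivity)
    set δ := min (|c| / 2) (δ₁ * c ^ 2 / (4 * M)) with hδdef
    have hδ : 0 < δ := lt_min (by positivity) (by positivity)
    have hYev : ∀ᶠ n in atTop,
        (μ {ω | δ ≤ dist (Y n ω) c}).toReal < ε / (8 * (‖f‖ + 1)) := by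
      have h := (tendstoInMeasure_iff_dist.mp hYprob δ hδ).eventually (gt_mem_nhds
        (show (0 : ENNReal) < ENNReal.ofReal (ε / (8 * (‖f‖ + 1))) from
          ENNReal.ofReal_pos.mpr ht))
      filter_upwards [h] with n hn
      exact (ENNReal.lt_ofReal_iff_toReal_lt (measure_ne_top _ _)).mp hn
    filter_upwards [hMev, hYev] with n hn1 hn2
    have hn1' : (μ {ω | M ≤ |X n ω|}).toReal < ε / (8 * (‖f‖ + 1)) := by
      rw [Measure.map_apply (hXmeas n)
        ((isClosed_le continuous_const continuous_abs).measurableSet)] at hn1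
      exact hn1
    have hgood : ∀ ω, |X n ω| < M → dist (Y n ω) c < δ →
        ‖f (X n ω / Y n ω) - f (X n ω / c)‖ ≤ ε / 4 := by
      intro ω hx hy
      have hy' : |Y n ω - c| < δ := by rwa [Real.dist_eq] at hy
      obtain ⟨hm1, hm2, hm3⟩ := slutsky_pointwise hc hM hδ₁ hx hy'
      have hlt := hucδ _ hm1 _ hm2 (by rw [Real.dist_eq]; exact hm3)
      rw [dist_eq_norm] at hlt
      exact hlt.le
    have hstep := slutsky_integral_step μ f (hXmeas n) (hYmeas n) c hε hgood
    refine lt_of_le_of_lt hstep ?_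
    have key : 2 * ‖f‖ * ((μ {ω | M ≤ |X n ω|}).toReal
          + (μ {ω | δ ≤ dist (Y n ω) c}).toReal)
        ≤ 2 * ‖f‖ * (2 * (ε / (8 * (‖f‖ + 1)))) :=
      mul_le_mul_of_nonneg_left (by linarith) (by positivity)
    have key2 : 2 * ‖f‖ * (2 * (ε / (8 * (‖f‖ + 1)))) ≤ ε / 2 := by
      rw [show 2 * ‖f‖ * (2 * (ε / (8 * (‖f‖ + 1)))) = ‖f‖ * ε / (2 * (‖f‖ + 1)) by
        field_simp; ring]
      rw [div_le_div_iff₀ (by positivity) (by norm_num : (0:ℝ) < 2)]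
      nlinarith [hε.le, hf0]
    linarith
  have h2 : (fun n => (∫ ω, f (X n ω / Y n ω) ∂μ - ∫ ω, f (X n ω / c) ∂μ)
      + ∫ ω, f (X n ω / c) ∂μ) = fun n => ∫ ω, f (X n ω / Y n ω) ∂μ := by
    funext n; ring
  have h3 := hdiff.add hJ
  rw [zero_add] at h3
  rw [← h2]
  exact h3
end
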